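/- Every α-block-diagonally-dominant Hermitian matrix M can be written as M = X + L where X is block-diagonal, L is block diagonally dominant, and X ⪰ (α/2)·L. -/

import Mathlib

open Matrix Finset
open scoped ComplexOrder
set_option maxHeartbeats 1000000
set_option synthInstance.maxHeartbeats 1000000

/-- The `ℓ²` operator norm of a square complex matrix. -/
noncomputable def matOpNorm {r : ℕ} (A : Matrix (Fin r) (Fin r) ℂ) : ℝ :=
  ‖(Matrix.toEuclideanCLM (𝕜 := ℂ) A : EuclideanSpace ℂ (Fin r) →L[ℂ] EuclideanSpace ℂ (Fin r))‖

/-- A Hermitian block matrix (given by its `r × r` blocks) is block diagonally dominant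
if for every `i`, `M i i ⪰ (∑_{j ≠ i} ‖M i j‖) · I`. -/
def IsBDD {n r : ℕ} (M : Fin n → Fin n → Matrix (Fin r) (Fin r) ℂ) : Prop :=
  ∀ i, (M i i - (∑ j ∈ Finset.univ.erase i, matOpNorm (M i j)) •
      (1 : Matrix (Fin r) (Fin r) ℂ)).PosSemidef

/-- Flatten a block matrix into an ordinary matrix. -/
def flatten {n r : ℕ} (M : Fin n → Fin n → Matrix (Fin r) (Fin r) ℂ) :
    Matrix (Fin n × Fin r) (Fin n × Fin r) ℂ :=
  Matrix.of fun p q => M p.1 q.1 p.2 q.2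

lemma matOpNorm_conjTranspose {r : ℕ} (A : Matrix (Fin r) (Fin r) ℂ) :
    matOpNorm Aᴴ = matOpNorm A := by
  unfold matOpNorm
  rw [show Aᴴ = star A from rfl, map_star]
  exact LinearIsometryEquiv.norm_map
    (starₗᵢ ℂ (E := EuclideanSpace ℂ (Fin r) →L[ℂ] EuclideanSpace ℂ (Fin r)))
    (Matrix.toEuclideanCLM (𝕜 := ℂ) A)

lemma matOpNorm_real_smul {r : ℕ} (c : ℝ) (A : Matrix (Fin r) (Fin r) ℂ) :
    matOpNorm (c • A) = |c| * matOpNorm A := by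
  unfold matOpNorm
  have : (c • A) = (c : ℂ) • A := by ext i j; simp [Complex.real_smul]
  rw [this, _root_.map_smul]
  rw [norm_smul (c : ℂ) (Matrix.toEuclideanCLM (𝕜 := ℂ) A)]
  simp

lemma dot_bound {r : ℕ} (A : Matrix (Fin r) (Fin r) ℂ) (v w : Fin r → ℂ) :
    ‖star v ⬝ᵥ (A *ᵥ w)‖ ≤ matOpNorm A * ‖(WithLp.equiv 2 (Fin r → ℂ)).symm v‖ *
      ‖(WithLp.equiv 2 (Fin r → ℂ)).symm w‖ := by
  have h : star v ⬝ᵥ (A *ᵥ w) =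
      inner ℂ ((WithLp.equiv 2 (Fin r → ℂ)).symm v)
        (Matrix.toEuclideanCLM (𝕜 := ℂ) A ((WithLp.equiv 2 (Fin r → ℂ)).symm w)) := by
    rw [dotProduct_comm]; rfl
  rw [h]
  calc ‖_‖ ≤ ‖(WithLp.equiv 2 (Fin r → ℂ)).symm v‖ *
        ‖Matrix.toEuclideanCLM (𝕜 := ℂ) A ((WithLp.equiv 2 (Fin r → ℂ)).symm w)‖ :=
      norm_inner_le_norm _ _
    _ ≤ ‖(WithLp.equiv 2 (Fin r → ℂ)).symm v‖ *
        (matOpNorm A * ‖(WithLp.equiv 2 (Fin r → ℂ)).symm w‖) := by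
      gcongr
      exact ContinuousLinearMap.le_opNorm _ _
    _ = _ := by ring

lemma diag_bound {r : ℕ} {A : Matrix (Fin r) (Fin r) ℂ} {s : ℝ}
    (h : (A - s • (1 : Matrix (Fin r) (Fin r) ℂ)).PosSemidef) (v : Fin r → ℂ) :
    s * ‖(WithLp.equiv 2 (Fin r → ℂ)).symm v‖ ^ 2 ≤ (star v ⬝ᵥ (A *ᵥ v)).re := by
  have h2 := h.dotProduct_mulVec_nonneg v
  have hd : star v ⬝ᵥ ((A - s • (1 : Matrix (Fin r) (Fin r) ℂ)) *ᵥ v)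
      = star v ⬝ᵥ (A *ᵥ v) - (s : ℂ) * (star v ⬝ᵥ v) := by
    rw [Matrix.sub_mulVec, dotProduct_sub, Matrix.smul_mulVec, Matrix.one_mulVec,
      dotProduct_smul]
    simp [Complex.real_smul]
  have hv : star v ⬝ᵥ v = ((‖(WithLp.equiv 2 (Fin r → ℂ)).symm v‖ : ℂ) ^ 2) := by
    rw [show star v ⬝ᵥ v = inner ℂ ((WithLp.equiv 2 (Fin r → ℂ)).symm v)
      ((WithLp.equiv 2 (Fin r → ℂ)).symm v) from by rw [dotProduct_comm]; rfl]
    exact inner_self_eq_norm_sq_to_K _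
  rw [hd, hv, ← Complex.ofReal_pow, ← Complex.ofReal_mul] at h2
  have := (Complex.nonneg_iff.mp h2).1
  simp only [Complex.sub_re, Complex.ofReal_re] at this
  linarith

lemma flatten_isHermitian {n r : ℕ} {B : Fin n → Fin n → Matrix (Fin r) (Fin r) ℂ}
    (hH : ∀ i j, (B i j)ᴴ = B j i) : (flatten B).IsHermitian := by
  ext p q
  have := congrFun (congrFun (hH q.1 p.1) p.2) q.2
  simpa [flatten, Matrix.conjTranspose_apply] using this

lemma isBDD_flatten_posSemidef {n r : ℕ} {B : Fin n → Fin n → Matrix (Fin r) (Fin r) ℂ}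
    (hH : ∀ i j, (B i j)ᴴ = B j i) (hb : IsBDD B) : (flatten B).PosSemidef := by
  have hherm := flatten_isHermitian hH
  refine PosSemidef.of_dotProduct_mulVec_nonneg hherm fun x => ?_
  set v : Fin n → Fin r → ℂ := fun i k => x (i, k) with hv
  set nv : Fin n → ℝ := fun i => ‖(WithLp.equiv 2 (Fin r → ℂ)).symm (v i)‖ with hnv
  set N : Fin n → Fin n → ℝ := fun i j => matOpNorm (B i j) with hN
  set T : Fin n → Fin n → ℂ := fun i j => star (v i) ⬝ᵥ (B i j *ᵥ v j) with hT
  -- Q decomposes as a double sum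
  have hQ : star x ⬝ᵥ (flatten B *ᵥ x) = ∑ i, ∑ j, T i j := by
    simp only [dotProduct, mulVec, flatten, Matrix.of_apply, Fintype.sum_prod_type, hT,
      Finset.mul_sum, Pi.star_apply]
    refine Finset.sum_congr rfl fun i _ => ?_
    rw [Finset.sum_comm]
  -- Q is self-adjoint
  have hstar : star (star x ⬝ᵥ (flatten B *ᵥ x)) = star x ⬝ᵥ (flatten B *ᵥ x) := by
    conv_lhs => rw [Matrix.star_dotProduct, star_star]
    rw [Matrix.star_mulVec, ← Matrix.dotProduct_mulVec, hherm]
  -- real part is nonnegative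
  have hnvnn : ∀ i, 0 ≤ nv i := fun i => norm_nonneg _
  have hNnn : ∀ i j, 0 ≤ N i j := fun i j => norm_nonneg _
  have hNsymm : ∀ i j, N i j = N j i := by
    intro i j
    rw [hN]
    dsimp only
    rw [← hH j i, matOpNorm_conjTranspose]
  have hre : 0 ≤ (star x ⬝ᵥ (flatten B *ᵥ x)).re := by
    rw [hQ]
    have hres : (∑ i, ∑ j, T i j).re = ∑ i, ∑ j, (T i j).re := by
      rw [Complex.re_sum]
      exact Finset.sum_congr rfl fun i _ => Complex.re_sum _ _
    rw [hres]
    have key : ∀ i, (∑ j ∈ Finset.univ.erase i, N i j) * nv i ^ 2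
        - ∑ j ∈ Finset.univ.erase i, N i j * nv i * nv j ≤ ∑ j, (T i j).re := by
      intro i
      rw [← Finset.add_sum_erase (univ : Finset (Fin n)) (fun j => (T i j).re) (mem_univ i)]
      have h1 : (∑ j ∈ Finset.univ.erase i, N i j) * nv i ^ 2 ≤ (T i i).re :=
        diag_bound (hb i) (v i)
      have h2 : ∀ j ∈ Finset.univ.erase i, -(N i j * nv i * nv j) ≤ (T i j).re := by
        intro j _
        have hb1 : ‖T i j‖ ≤ N i j * nv i * nv j := dot_bound (B i j) (v i) (v j)
        have : -(‖T i j‖) ≤ (T i j).re := by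
          have := Complex.abs_re_le_norm (T i j)
          cases abs_le.mp this with
          | intro hl hr => linarith
        linarith
      have h3 : ∑ j ∈ Finset.univ.erase i, (-(N i j * nv i * nv j))
          ≤ ∑ j ∈ Finset.univ.erase i, (T i j).re := Finset.sum_le_sum h2
      rw [Finset.sum_neg_distrib] at h3
      linarith
    have keysum : ∑ i, ((∑ j ∈ Finset.univ.erase i, N i j) * nv i ^ 2
        - ∑ j ∈ Finset.univ.erase i, N i j * nv i * nv j) ≤ ∑ i, ∑ j, (T i j).re :=
      Finset.sum_le_sum fun i _ => key i
    have main : 0 ≤ ∑ i, ((∑ j ∈ Finset.univ.erase i, N i j) * nv i ^ 2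
        - ∑ j ∈ Finset.univ.erase i, N i j * nv i * nv j) := by
      rw [Finset.sum_sub_distrib]
      rw [sub_nonneg]
      have step1 : ∑ i, ∑ j ∈ Finset.univ.erase i, N i j * nv i * nv j
          ≤ ∑ i, ∑ j ∈ Finset.univ.erase i, N i j * ((nv i ^ 2 + nv j ^ 2) / 2) := by
        refine Finset.sum_le_sum fun i _ => Finset.sum_le_sum fun j _ => ?_
        have h := sq_nonneg (nv i - nv j)
        have := hNnn i j
        nlinarith [hnvnn i, hnvnn j]
      have step2 : ∑ i, ∑ j ∈ Finset.univ.erase i, N i j * ((nv i ^ 2 + nv j ^ 2) / 2)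
          = ∑ i, (∑ j ∈ Finset.univ.erase i, N i j) * nv i ^ 2 := by
        have e1 : ∀ i, ∑ j ∈ Finset.univ.erase i, N i j * ((nv i ^ 2 + nv j ^ 2) / 2)
            = ∑ j ∈ Finset.univ.erase i, (N i j * nv i ^ 2 / 2 + N i j * nv j ^ 2 / 2) := by
          intro i; exact Finset.sum_congr rfl fun j _ => by ring
        simp_rw [e1, Finset.sum_add_distrib]
        have e2 : ∑ i, ∑ j ∈ Finset.univ.erase i, N i j * nv j ^ 2 / 2
            = ∑ i, ∑ j ∈ Finset.univ.erase i, N i j * nv i ^ 2 / 2 := by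
          rw [Finset.sum_comm' (s' := fun j => Finset.univ.erase j) (t' := Finset.univ)]
          · refine Finset.sum_congr rfl fun j _ => Finset.sum_congr rfl fun i hi => ?_
            rw [hNsymm j i]
          · intro i j
            simp only [Finset.mem_erase, Finset.mem_univ, and_true, true_and]
            tauto
        rw [e2, ← Finset.sum_add_distrib]
        refine Finset.sum_congr rfl fun i _ => ?_
        rw [Finset.sum_mul]
        rw [← Finset.sum_add_distrib]
        refine Finset.sum_congr rfl fun j _ => by ring
      calc ∑ i, ∑ j ∈ Finset.univ.erase i, N i j * nv i * nv j
          ≤ ∑ i, ∑ j ∈ Finset.univ.erase i, N i j * ((nv i ^ 2 + nv j ^ 2) / 2) := step1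
        _ = ∑ i, (∑ j ∈ Finset.univ.erase i, N i j) * nv i ^ 2 := step2
    linarith
  rw [Complex.nonneg_iff]
  constructor
  · exact hre
  · have : (starRingEnd ℂ) (star x ⬝ᵥ (flatten B *ᵥ x)) = star x ⬝ᵥ (flatten B *ᵥ x) := hstar
    have him := (Complex.conj_eq_iff_im.mp this)
    exact him.symm

/-- Every `α`-bDD Hermitian block matrix `M` can be written as `M = X + L` with `X`
block diagonal, `L` bDD, and `X ⪰ (α/2) L`. -/
theorem stmt_10 {n r : ℕ} (α : ℝ) (hα : 0 ≤ α)
    (M : Fin n → Fin n → Matrix (Fin r) (Fin r) ℂ)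
    (hHerm : ∀ i j, (M i j)ᴴ = M j i)
    (habdd : ∀ i, (M i i - ((1 + α) * ∑ j ∈ Finset.univ.erase i, matOpNorm (M i j)) •
        (1 : Matrix (Fin r) (Fin r) ℂ)).PosSemidef) :
    ∃ X L : Fin n → Fin n → Matrix (Fin r) (Fin r) ℂ,
      (∀ i j, i ≠ j → X i j = 0) ∧
      (∀ i j, M i j = X i j + L i j) ∧
      IsBDD L ∧
      (flatten X - (α / 2 : ℝ) • flatten L).PosSemidef := by
  set s : Fin n → ℝ := fun i => ∑ j ∈ Finset.univ.erase i, matOpNorm (M i j) with hs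
  set X : Fin n → Fin n → Matrix (Fin r) (Fin r) ℂ :=
    fun i j => if i = j then M i i - s i • (1 : Matrix (Fin r) (Fin r) ℂ) else 0 with hX
  set L : Fin n → Fin n → Matrix (Fin r) (Fin r) ℂ :=
    fun i j => if i = j then s i • (1 : Matrix (Fin r) (Fin r) ℂ) else M i j with hL
  refine ⟨X, L, fun i j hij => by simp [hX, hij], fun i j => ?_, ?_, ?_⟩
  · by_cases hij : i = j
    · subst hij; simp [hX, hL]
    · simp [hX, hL, hij]
  · -- IsBDD L
    intro i
    have hsum : ∑ j ∈ Finset.univ.erase i, matOpNorm (L i j) = s i := by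
      refine Finset.sum_congr rfl fun j hj => ?_
      have : i ≠ j := fun h => (Finset.mem_erase.mp hj).1 h.symm
      simp [hL, this]
    rw [hsum]
    simp only [hL, if_pos rfl, sub_self]
    exact Matrix.PosSemidef.zero
  · -- the PSD part
    set B : Fin n → Fin n → Matrix (Fin r) (Fin r) ℂ :=
      fun i j => X i j - (α / 2 : ℝ) • L i j with hB
    have hflat : flatten X - (α / 2 : ℝ) • flatten L = flatten B := by
      ext p q
      simp [flatten, hB, Matrix.sub_apply, Matrix.smul_apply]
    rw [hflat]
    have hBH : ∀ i j, (B i j)ᴴ = B j i := by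
      intro i j
      by_cases hij : i = j
      · subst hij
        simp [hB, hX, hL, hHerm i i]
      · have hji : ¬ (j = i) := fun h => hij h.symm
        simp only [hB, hX, hL, if_neg hij, if_neg hji, zero_sub]
        rw [Matrix.conjTranspose_neg, Matrix.conjTranspose_smul, hHerm i j]
        simp
    have hBoff : ∀ i j, i ≠ j → B i j = (-(α / 2) : ℝ) • M i j := by
      intro i j hij
      simp only [hB, hX, hL, if_neg hij, zero_sub, neg_smul]
    refine isBDD_flatten_posSemidef hBH ?_
    intro i
    have hsum : ∑ j ∈ Finset.univ.erase i, matOpNorm (B i j) = (α / 2) * s i := by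
      rw [hs, Finset.mul_sum]
      refine Finset.sum_congr rfl fun j hj => ?_
      have hij : i ≠ j := fun h => (Finset.mem_erase.mp hj).1 h.symm
      rw [hBoff i j hij, matOpNorm_real_smul]
      rw [abs_neg, abs_of_nonneg (by linarith : (0:ℝ) ≤ α / 2)]
    rw [hsum]
    have hBii : B i i = M i i - s i • (1 : Matrix (Fin r) (Fin r) ℂ)
        - ((α / 2) * s i) • (1 : Matrix (Fin r) (Fin r) ℂ) := by
      simp only [hB, hX, hL, if_true, eq_self_iff_true, smul_smul]
    rw [hBii]
    have : M i i - s i • (1 : Matrix (Fin r) (Fin r) ℂ)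
        - ((α / 2) * s i) • (1 : Matrix (Fin r) (Fin r) ℂ)
        - ((α / 2) * s i) • (1 : Matrix (Fin r) (Fin r) ℂ)
        = M i i - ((1 + α) * s i) • (1 : Matrix (Fin r) (Fin r) ℂ) := by
      module
    rw [this]
    exact habdd i
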